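/- Let Z ≥ 0 be a nonnegative real-valued random variable and f a nonnegative nondecreasing function on [0,∞). Then E[Z·f(2Z)] ≥ (E[Z]/2)·f(E[Z]). -/

import Mathlib

open MeasureTheory ProbabilityTheory

/-- Lemma 4 of the paper: for a nonnegative random variable `Z` and a nonnegative
nondecreasing function `f` on `[0,∞)`, `E[Z·f(2Z)] ≥ (E[Z]/2)·f(E[Z])`. -/
theorem stmt_0 {Ω : Type*} [MeasureSpace Ω] [IsProbabilityMeasure (ℙ : Measure Ω)]
    (Z : Ω → ℝ) (hZmeas : Measurable Z) (hZ0 : ∀ ω, 0 ≤ Z ω) (hZint : Integrable Z)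
    (f : ℝ → ℝ) (hf0 : ∀ x, 0 ≤ x → 0 ≤ f x) (hfmono : MonotoneOn f (Set.Ici 0))
    (hint : Integrable (fun ω => Z ω * f (2 * Z ω))) :
    (∫ ω, Z ω) / 2 * f (∫ ω, Z ω) ≤ ∫ ω, Z ω * f (2 * Z ω) := by
  set m : ℝ := ∫ ω, Z ω with hm_def
  have hm : 0 ≤ m := integral_nonneg hZ0
  set A : Set Ω := {ω | m / 2 ≤ Z ω} with hA_def
  have hA : MeasurableSet A := measurableSet_le measurable_const hZmeas
  -- step 1 : ∫_Aᶜ Z ≤ m/2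
  have hcompl : ∫ ω in Aᶜ, Z ω ≤ m / 2 := by
    have h1 : ∫ ω in Aᶜ, Z ω ≤ ∫ _ω in Aᶜ, m / 2 := by
      apply setIntegral_mono_on hZint.integrableOn (integrableOn_const (measure_ne_top _ _)) hA.compl
      intro ω hω
      exact le_of_lt (by simpa [hA_def] using hω)
    have h2 : ∫ _ω in Aᶜ, m / 2 ≤ m / 2 := by
      rw [setIntegral_const]
      calc (ℙ Aᶜ).toReal • (m / 2) ≤ 1 * (m / 2) := by
            rw [smul_eq_mul]
            apply mul_le_mul_of_nonneg_right _ (by linarith)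
            exact ENNReal.toReal_le_of_le_ofReal zero_le_one (by simpa using prob_le_one)
        _ = m / 2 := one_mul _
    linarith
  -- step 2 : ∫_A Z ≥ m/2
  have hAint : m / 2 ≤ ∫ ω in A, Z ω := by
    have := integral_add_compl hA hZint (f := Z)
    have hm2 : (∫ ω in A, Z ω) + (∫ ω in Aᶜ, Z ω) = m := this
    linarith
  -- step 3 : ∫_A Z * f m ≤ ∫_A Z * f (2 Z)
  have hstep3 : ∫ ω in A, Z ω * f m ≤ ∫ ω in A, Z ω * f (2 * Z ω) := by
    apply setIntegral_mono_on (hZint.mul_const (f m)).integrableOn hint.integrableOn hA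
    intro ω hω
    have h2Z : m ≤ 2 * Z ω := by
      have : m / 2 ≤ Z ω := hω
      linarith
    exact mul_le_mul_of_nonneg_left
      (hfmono (Set.mem_Ici.2 hm) (Set.mem_Ici.2 (by linarith [hZ0 ω])) h2Z) (hZ0 ω)
  -- step 4 : ∫_A Z f(2Z) ≤ ∫ Z f(2Z)
  have hstep4 : ∫ ω in A, Z ω * f (2 * Z ω) ≤ ∫ ω, Z ω * f (2 * Z ω) := by
    apply setIntegral_le_integral hint
    filter_upwards with ω
    exact mul_nonneg (hZ0 ω) (hf0 _ (by linarith [hZ0 ω]))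
  have hstep5 : ∫ ω in A, Z ω * f m = f m * ∫ ω in A, Z ω := by
    rw [integral_mul_const]; ring
  have hfm : 0 ≤ f m := hf0 m hm
  calc m / 2 * f m = f m * (m / 2) := by ring
    _ ≤ f m * ∫ ω in A, Z ω := mul_le_mul_of_nonneg_left hAint hfm
    _ = ∫ ω in A, Z ω * f m := hstep5.symm
    _ ≤ ∫ ω in A, Z ω * f (2 * Z ω) := hstep3
    _ ≤ ∫ ω, Z ω * f (2 * Z ω) := hstep4
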